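/- Let X be a real normed linear space, A, B ⊆ X, a ∈ A, b ∈ B. The pair {A,B} is approximately stationary relative to a and b if and only if for every ε > 0 there exist y ∈ B_ε(a), z ∈ B_ε(b) and x ∈ ε𝔹 such that max{d(x, A − y), d(x, B − z)} < ε · d(x, (A − y) ∩ (B − z)), where distances are understood as extended distances, with the distance from a point to the empty set equal to +∞. -/

import Mathlib

open Metric

variable {X : Type*} [NormedAddCommGroup X] [NormedSpace ℝ X]

/-- The pair {A,B} is extremal relative to the points `a ∈ A` and `b ∈ B`. -/
def ExtremalRel (A B : Set X) (a b : X) : Prop :=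
  ∀ ε > (0 : ℝ), ∃ u v : X,
    ((fun x => x - a - u) '' A) ∩ ((fun x => x - b - v) '' B) = ∅ ∧
    max ‖u‖ ‖v‖ < ε

/-- The pair {A,B} is locally extremal relative to the points `a ∈ A` and `b ∈ B`. -/
def LocallyExtremalRel (A B : Set X) (a b : X) : Prop :=
  ∃ ρ > (0 : ℝ), ∀ ε > (0 : ℝ), ∃ u v : X,
    ((fun x => x - a - u) '' A) ∩ ((fun x => x - b - v) '' B) ∩
      closedBall (0 : X) ρ = ∅ ∧
    max ‖u‖ ‖v‖ < ε

/-- The pair {A,B} is stationary relative to the points `a ∈ A` and `b ∈ B`. -/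
def StationaryRel (A B : Set X) (a b : X) : Prop :=
  ∀ ε > (0 : ℝ), ∃ ρ : ℝ, 0 < ρ ∧ ρ < ε ∧ ∃ u v : X,
    ((fun x => x - a - u) '' A) ∩ ((fun x => x - b - v) '' B) ∩
      closedBall (0 : X) ρ = ∅ ∧
    max ‖u‖ ‖v‖ < ε * ρ

/-- The pair {A,B} is approximately stationary relative to `a ∈ A` and `b ∈ B`. -/
def ApproxStationaryRel (A B : Set X) (a b : X) : Prop :=
  ∀ ε > (0 : ℝ), ∃ ρ : ℝ, 0 < ρ ∧ ρ < ε ∧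
    ∃ a' ∈ A ∩ ball a ε, ∃ b' ∈ B ∩ ball b ε, ∃ u v : X,
      ((fun x => x - a' - u) '' A) ∩ ((fun x => x - b' - v) '' B) ∩
        closedBall (0 : X) ρ = ∅ ∧
      max ‖u‖ ‖v‖ < ε * ρ

/-- Metric characterization of relative approximate stationarity (extended distances,
with the distance to the empty set equal to `∞`). -/
theorem stmt_15 (A B : Set X) (a : X) (ha : a ∈ A) (b : X) (hb : b ∈ B) :
    ApproxStationaryRel A B a b ↔
      ∀ ε > (0 : ℝ), ∃ y ∈ ball a ε, ∃ z ∈ ball b ε, ∃ x ∈ closedBall (0 : X) ε,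
        max (EMetric.infEdist x ((fun w => w - y) '' A))
            (EMetric.infEdist x ((fun w => w - z) '' B)) <
          ENNReal.ofReal ε *
            EMetric.infEdist x
              (((fun w => w - y) '' A) ∩ ((fun w => w - z) '' B)) := by

  constructor
  · -- forward direction
    intro h ε hε
    set ε' := min (ε / 2) 1 with hε'def
    have hε'pos : 0 < ε' := lt_min (by linarith) one_pos
    have hε'le : ε' ≤ ε / 2 := min_le_left _ _
    have hε'le1 : ε' ≤ 1 := min_le_right _ _
    obtain ⟨ρ, hρ0, hρε', a', ⟨ha'A, ha'b⟩, b', ⟨hb'B, hb'b⟩, u, v, hempty, huv⟩ := h ε' hε'pos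
    have hu : ‖u‖ < ε' * ρ := lt_of_le_of_lt (le_max_left _ _) huv
    have hv : ‖v‖ < ε' * ρ := lt_of_le_of_lt (le_max_right _ _) huv
    have hsmall : ε' * ρ < ε' := by nlinarith
    have ha'ball : dist a' a < ε' := mem_ball.1 ha'b
    have hb'ball : dist b' b < ε' := mem_ball.1 hb'b
    refine ⟨a' + u, ?_, b' + v, ?_, 0, by simpa using hε.le, ?_⟩
    · rw [mem_ball]
      calc dist (a' + u) a ≤ dist (a' + u) a' + dist a' a := dist_triangle _ _ _
        _ = ‖u‖ + dist a' a := by rw [dist_eq_norm]; simp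
        _ < ε := by linarith
    · rw [mem_ball]
      calc dist (b' + v) b ≤ dist (b' + v) b' + dist b' b := dist_triangle _ _ _
        _ = ‖v‖ + dist b' b := by rw [dist_eq_norm]; simp
        _ < ε := by linarith
    · have himA : (fun w => w - (a' + u)) '' A = (fun x => x - a' - u) '' A := by
        apply Set.image_congr'
        intro w; rw [sub_add_eq_sub_sub]
      have himB : (fun w => w - (b' + v)) '' B = (fun x => x - b' - v) '' B := by
        apply Set.image_congr'
        intro w; rw [sub_add_eq_sub_sub]
      rw [himA, himB]
      have hlow : ENNReal.ofReal ρ ≤ EMetric.infEdist (0 : X)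
          (((fun x => x - a' - u) '' A) ∩ ((fun x => x - b' - v) '' B)) := by
        refine EMetric.le_infEdist.2 ?_
        intro w hw
        have hwn : w ∉ closedBall (0 : X) ρ := by
          intro hmem
          have hcontra : w ∈ ((fun x => x - a' - u) '' A) ∩ ((fun x => x - b' - v) '' B) ∩
              closedBall (0 : X) ρ := ⟨hw, hmem⟩
          rw [hempty] at hcontra
          exact hcontra
        rw [mem_closedBall, not_le] at hwn
        rw [edist_dist]
        exact ENNReal.ofReal_le_ofReal (by rw [dist_comm]; exact hwn.le)
      calc max (EMetric.infEdist (0 : X) ((fun x => x - a' - u) '' A))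
            (EMetric.infEdist (0 : X) ((fun x => x - b' - v) '' B))
          ≤ ENNReal.ofReal (max ‖u‖ ‖v‖) := by
            apply max_le
            · calc EMetric.infEdist (0 : X) ((fun x => x - a' - u) '' A)
                  ≤ edist (0 : X) (a' - a' - u) :=
                    EMetric.infEdist_le_edist_of_mem ⟨a', ha'A, rfl⟩
                _ = ENNReal.ofReal ‖u‖ := by rw [edist_dist]; simp [dist_eq_norm]
                _ ≤ ENNReal.ofReal (max ‖u‖ ‖v‖) :=
                    ENNReal.ofReal_le_ofReal (le_max_left _ _)
            · calc EMetric.infEdist (0 : X) ((fun x => x - b' - v) '' B)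
                  ≤ edist (0 : X) (b' - b' - v) :=
                    EMetric.infEdist_le_edist_of_mem ⟨b', hb'B, rfl⟩
                _ = ENNReal.ofReal ‖v‖ := by rw [edist_dist]; simp [dist_eq_norm]
                _ ≤ ENNReal.ofReal (max ‖u‖ ‖v‖) :=
                    ENNReal.ofReal_le_ofReal (le_max_right _ _)
        _ < ENNReal.ofReal (ε' * ρ) :=
            (ENNReal.ofReal_lt_ofReal_iff (mul_pos hε'pos hρ0)).2 huv
        _ = ENNReal.ofReal ε' * ENNReal.ofReal ρ := ENNReal.ofReal_mul hε'pos.le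
        _ ≤ ENNReal.ofReal ε * EMetric.infEdist (0 : X)
            (((fun x => x - a' - u) '' A) ∩ ((fun x => x - b' - v) '' B)) :=
            mul_le_mul' (ENNReal.ofReal_le_ofReal (by linarith)) hlow
  · -- backward direction
    intro h ε hε
    set ε' := min (ε / 8) (ε ^ 2 / 8) with hε'def
    have hε'pos : 0 < ε' := lt_min (by linarith) (by positivity)
    have h1 : ε' ≤ ε / 8 := min_le_left _ _
    have h2 : ε' ≤ ε ^ 2 / 8 := min_le_right _ _
    obtain ⟨y, hy, z, hz, x, hx, hlt⟩ := h ε' hε'pos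
    have hyb : dist y a < ε' := mem_ball.1 hy
    have hzb : dist z b < ε' := mem_ball.1 hz
    have hxn : ‖x‖ ≤ ε' := by rwa [mem_closedBall, dist_zero_right] at hx
    set SA := (fun w => w - y) '' A with hSAdef
    set SB := (fun w => w - z) '' B with hSBdef
    set r := EMetric.infEdist x (SA ∩ SB) with hrdef
    set dA := EMetric.infEdist x SA with hdAdef
    set dB := EMetric.infEdist x SB with hdBdef
    have hr0 : 0 < r := by
      rcases eq_or_lt_of_le (zero_le : 0 ≤ r) with h0 | h0
      · rw [← h0, mul_zero] at hlt
        exact absurd hlt (by simp)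
      · exact h0
    -- rough upper bounds on dA, dB
    have hdA2 : dA < ENNReal.ofReal (2 * ε') := by
      calc dA ≤ edist x (a - y) := EMetric.infEdist_le_edist_of_mem ⟨a, ha, rfl⟩
        _ = ENNReal.ofReal ‖x - (a - y)‖ := by rw [edist_dist, dist_eq_norm]
        _ < ENNReal.ofReal (2 * ε') := by
            apply (ENNReal.ofReal_lt_ofReal_iff (by positivity)).2
            have heq : x - (a - y) = x + (y - a) := by abel
            rw [heq]
            calc ‖x + (y - a)‖ ≤ ‖x‖ + ‖y - a‖ := norm_add_le _ _
              _ < 2 * ε' := by rw [← dist_eq_norm]; linarith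
    have hdB2 : dB < ENNReal.ofReal (2 * ε') := by
      calc dB ≤ edist x (b - z) := EMetric.infEdist_le_edist_of_mem ⟨b, hb, rfl⟩
        _ = ENNReal.ofReal ‖x - (b - z)‖ := by rw [edist_dist, dist_eq_norm]
        _ < ENNReal.ofReal (2 * ε') := by
            apply (ENNReal.ofReal_lt_ofReal_iff (by positivity)).2
            have heq : x - (b - z) = x + (z - b) := by abel
            rw [heq]
            calc ‖x + (z - b)‖ ≤ ‖x‖ + ‖z - b‖ := norm_add_le _ _
              _ < 2 * ε' := by rw [← dist_eq_norm]; linarith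
    -- define ρ
    have hmin_lt_top : min (ENNReal.ofReal ε) r < ⊤ :=
      lt_of_le_of_lt (min_le_left _ _) ENNReal.ofReal_lt_top
    have hmin_pos : 0 < min (ENNReal.ofReal ε) r :=
      lt_min (ENNReal.ofReal_pos.2 hε) hr0
    set m := (min (ENNReal.ofReal ε) r).toReal with hmdef
    have hm0 : 0 < m := ENNReal.toReal_pos hmin_pos.ne' hmin_lt_top.ne
    have hmε : m ≤ ε := by
      have : (min (ENNReal.ofReal ε) r).toReal ≤ (ENNReal.ofReal ε).toReal :=
        ENNReal.toReal_mono ENNReal.ofReal_ne_top (min_le_left _ _)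
      rwa [ENNReal.toReal_ofReal hε.le] at this
    set ρ := m / 2 with hρdef
    have hρ0 : 0 < ρ := by positivity
    have hρε : ρ < ε := by linarith
    have hofm : ENNReal.ofReal m = min (ENNReal.ofReal ε) r :=
      ENNReal.ofReal_toReal hmin_lt_top.ne
    have hρr : ENNReal.ofReal ρ < r := by
      calc ENNReal.ofReal ρ < ENNReal.ofReal m :=
            (ENNReal.ofReal_lt_ofReal_iff hm0).2 (by linarith)
        _ = min (ENNReal.ofReal ε) r := hofm
        _ ≤ r := min_le_right _ _
    -- key: max dA dB < ofReal (ε * ρ)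
    have hkey : max dA dB < ENNReal.ofReal (ε * ρ) := by
      rcases le_total (ENNReal.ofReal ε) r with hle | hle
      · have hme : m = ε := by
          rw [hmdef, min_eq_left hle, ENNReal.toReal_ofReal hε.le]
        have : 2 * ε' ≤ ε * ρ := by
          rw [hρdef, hme]; nlinarith
        calc max dA dB < ENNReal.ofReal (2 * ε') := max_lt hdA2 hdB2
          _ ≤ ENNReal.ofReal (ε * ρ) := ENNReal.ofReal_le_ofReal this
      · have hrt : r ≠ ⊤ := (lt_of_le_of_lt hle ENNReal.ofReal_lt_top).ne
        have hme : m = r.toReal := by rw [hmdef, min_eq_right hle]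
        have hrtp : 0 < r.toReal := ENNReal.toReal_pos hr0.ne' hrt
        calc max dA dB < ENNReal.ofReal ε' * r := hlt
          _ = ENNReal.ofReal (ε' * r.toReal) := by
              rw [ENNReal.ofReal_mul hε'pos.le, ENNReal.ofReal_toReal hrt]
          _ ≤ ENNReal.ofReal (ε * ρ) := by
              apply ENNReal.ofReal_le_ofReal
              rw [hρdef, hme]
              nlinarith
    set β := min (ε * ρ) (ε / 2) with hβdef
    have hβ0 : 0 < β := lt_min (by positivity) (by linarith)
    have hβρ : β ≤ ε * ρ := min_le_left _ _
    have hβε : β ≤ ε / 2 := min_le_right _ _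
    have hAβ : dA < ENNReal.ofReal β := by
      rcases min_cases (ε * ρ) (ε / 2) with ⟨hm1, hm2⟩ | ⟨hm1, hm2⟩ <;> rw [hβdef, hm1]
      · exact lt_of_le_of_lt (le_max_left _ _) hkey
      · calc dA < ENNReal.ofReal (2 * ε') := hdA2
          _ ≤ ENNReal.ofReal (ε / 2) := ENNReal.ofReal_le_ofReal (by linarith)
    have hBβ : dB < ENNReal.ofReal β := by
      rcases min_cases (ε * ρ) (ε / 2) with ⟨hm1, hm2⟩ | ⟨hm1, hm2⟩ <;> rw [hβdef, hm1]
      · exact lt_of_le_of_lt (le_max_right _ _) hkey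
      · calc dB < ENNReal.ofReal (2 * ε') := hdB2
          _ ≤ ENNReal.ofReal (ε / 2) := ENNReal.ofReal_le_ofReal (by linarith)
    obtain ⟨p, hpSA, hpd⟩ := EMetric.infEdist_lt_iff.1 hAβ
    obtain ⟨q, hqSB, hqd⟩ := EMetric.infEdist_lt_iff.1 hBβ
    obtain ⟨a'', ha''A, ha''eq⟩ := hpSA
    obtain ⟨b'', hb''B, hb''eq⟩ := hqSB
    have hpd' : ‖x - p‖ < β := by
      rw [edist_dist, dist_eq_norm] at hpd
      exact (ENNReal.ofReal_lt_ofReal_iff hβ0).1 hpd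
    have hqd' : ‖x - q‖ < β := by
      rw [edist_dist, dist_eq_norm] at hqd
      exact (ENNReal.ofReal_lt_ofReal_iff hβ0).1 hqd
    set u := y + x - a'' with hudef
    set v := z + x - b'' with hvdef
    have hun : ‖u‖ < β := by
      have : u = x - p := by rw [hudef, ← ha''eq]; beta_reduce; abel
      rw [this]; exact hpd'
    have hvn : ‖v‖ < β := by
      have : v = x - q := by rw [hvdef, ← hb''eq]; beta_reduce; abel
      rw [this]; exact hqd'
    have hya : ‖y - a‖ < ε' := by rwa [dist_eq_norm] at hyb
    have hzb' : ‖z - b‖ < ε' := by rwa [dist_eq_norm] at hzb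
    have ha''ball : a'' ∈ ball a ε := by
      rw [mem_ball, dist_eq_norm]
      have heq : a'' - a = -(x - p) + x + (y - a) := by rw [← ha''eq]; beta_reduce; abel
      calc ‖a'' - a‖ = ‖-(x - p) + x + (y - a)‖ := by rw [heq]
        _ ≤ ‖-(x - p) + x‖ + ‖y - a‖ := norm_add_le _ _
        _ ≤ ‖-(x - p)‖ + ‖x‖ + ‖y - a‖ := by linarith [norm_add_le (-(x - p)) x]
        _ = ‖x - p‖ + ‖x‖ + ‖y - a‖ := by rw [norm_neg]
        _ < ε := by linarith
    have hb''ball : b'' ∈ ball b ε := by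
      rw [mem_ball, dist_eq_norm]
      have heq : b'' - b = -(x - q) + x + (z - b) := by rw [← hb''eq]; beta_reduce; abel
      calc ‖b'' - b‖ = ‖-(x - q) + x + (z - b)‖ := by rw [heq]
        _ ≤ ‖-(x - q) + x‖ + ‖z - b‖ := norm_add_le _ _
        _ ≤ ‖-(x - q)‖ + ‖x‖ + ‖z - b‖ := by linarith [norm_add_le (-(x - q)) x]
        _ = ‖x - q‖ + ‖x‖ + ‖z - b‖ := by rw [norm_neg]
        _ < ε := by linarith
    refine ⟨ρ, hρ0, hρε, a'', ⟨ha''A, ha''ball⟩, b'', ⟨hb''B, hb''ball⟩, u, v, ?_, ?_⟩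
    · rw [Set.eq_empty_iff_forall_notMem]
      rintro w ⟨⟨⟨s, hsA, hseq⟩, ⟨t, htB, hteq⟩⟩, hwball⟩
      have hwA : w + x ∈ SA := by
        refine ⟨s, hsA, ?_⟩
        have hseq2 : s - a'' - u = w := hseq
        have : s - a'' - u = s - y - x := by rw [hudef]; abel
        rw [this] at hseq2
        show s - y = w + x
        rw [← hseq2]; abel
      have hwB : w + x ∈ SB := by
        refine ⟨t, htB, ?_⟩
        have hteq2 : t - b'' - v = w := hteq
        have : t - b'' - v = t - z - x := by rw [hvdef]; abel
        rw [this] at hteq2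
        show t - z = w + x
        rw [← hteq2]; abel
      have hrle : r ≤ edist x (w + x) :=
        EMetric.infEdist_le_edist_of_mem ⟨hwA, hwB⟩
      have hed : edist x (w + x) ≤ ENNReal.ofReal ρ := by
        rw [edist_dist, dist_eq_norm]
        apply ENNReal.ofReal_le_ofReal
        have : ‖x - (w + x)‖ = ‖w‖ := by rw [show x - (w + x) = -w by abel, norm_neg]
        rw [this]
        rwa [mem_closedBall, dist_zero_right] at hwball
      exact absurd (lt_of_lt_of_le hρr (hrle.trans hed)) (lt_irrefl _)
    · exact max_lt (lt_of_lt_of_le hun hβρ) (lt_of_lt_of_le hvn hβρ)
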